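/- With notation as for a sparse operator on a dyadic grid: T^S satisfies the weak (1,1) inequality μ({x : T^S f(x) > λ}) ≤ (C/λ) ∫_X |f| dμ for all λ > 0 and f ∈ L¹(μ), with C an absolute constant. -/

import Mathlib

open MeasureTheory Real Set Filter

/-- The normalized Luxemburg (Orlicz) norm of `v` over the set `E`:
`inf { λ > 0 : μ(E)⁻¹ ∫_E A(|v|/λ) dμ ≤ 1 }`. -/
noncomputable def luxNorm {X : Type*} [MeasurableSpace X] (μ : Measure X)
    (A : ℝ → ℝ) (E : Set X) (v : X → ℝ) : ℝ :=
  sInf {l : ℝ | 0 < l ∧ ∫⁻ x in E, ENNReal.ofReal (A (|v x| / l)) ∂μ ≤ μ E}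

/-- A Young function: continuous, convex, increasing on `[0,∞)`, vanishing at `0`,
with superlinear growth at infinity. -/
def IsYoung (A : ℝ → ℝ) : Prop :=
  ContinuousOn A (Set.Ici 0) ∧ ConvexOn ℝ (Set.Ici 0) A ∧ MonotoneOn A (Set.Ici 0) ∧
    A 0 = 0 ∧ Filter.Tendsto (fun t => A t / t) Filter.atTop Filter.atTop

namespace SparseAux

open scoped Classical ENNReal

variable {X : Type} [MeasurableSpace X]

/-- real measure -/
noncomputable def mr (μ : Measure X) (Q : Set X) : ℝ := (μ Q).toReal

/-- average of `f` over `Q` -/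
noncomputable def avg (μ : Measure X) (f : X → ℝ) (Q : Set X) : ℝ :=
  (μ Q).toReal⁻¹ * ∫ y in Q, f y ∂μ

/-- `Q` has a finite chain of supersets in `S` whose averages sum to more than `lam`. -/
def Big (μ : Measure X) (S : Set (Set X)) (f : X → ℝ) (lam : ℝ) (Q : Set X) : Prop :=
  Q ∈ S ∧ ∃ G : Finset (Set X), ↑G ⊆ S ∧ (∀ R ∈ G, Q ⊆ R) ∧ lam < ∑ R ∈ G, avg μ f R

/-- Hypothesis bundle. -/
structure SCtx (μ : Measure X) (S : Set (Set X)) (E : Set X → Set X) (f : X → ℝ) : Prop where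
  meas : ∀ Q ∈ S, MeasurableSet Q
  pos : ∀ Q ∈ S, 0 < μ Q
  fin : ∀ Q ∈ S, μ Q < ⊤
  nest : ∀ Q ∈ S, ∀ Q' ∈ S, Q ∩ Q' = ∅ ∨ Q ⊆ Q' ∨ Q' ⊆ Q
  Esub : ∀ Q ∈ S, E Q ⊆ Q
  Emeas : ∀ Q ∈ S, MeasurableSet (E Q)
  Edisj : ∀ Q ∈ S, ∀ Q' ∈ S, Q ≠ Q' → E Q ∩ E Q' = ∅
  Esp : ∀ Q ∈ S, μ Q ≤ 2 * μ (E Q)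
  fmeas : Measurable f
  fpos : ∀ x, 0 ≤ f x
  fint : Integrable f μ

variable {μ : Measure X} {S : Set (Set X)} {E : Set X → Set X} {f : X → ℝ}

lemma SCtx.nonempty (h : SCtx μ S E f) {Q : Set X} (hQ : Q ∈ S) : Q.Nonempty := by
  rcases Set.eq_empty_or_nonempty Q with rfl | hne
  · have := h.pos _ hQ; simp at this
  · exact hne

lemma SCtx.mr_pos (h : SCtx μ S E f) {Q : Set X} (hQ : Q ∈ S) : 0 < mr μ Q :=
  ENNReal.toReal_pos (h.pos _ hQ).ne' (h.fin _ hQ).ne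

lemma mr_nonneg (μ : Measure X) (Q : Set X) : 0 ≤ mr μ Q := ENNReal.toReal_nonneg

lemma SCtx.comparable (h : SCtx μ S E f) {Q Q' : Set X} (hQ : Q ∈ S) (hQ' : Q' ∈ S)
    (hne : (Q ∩ Q').Nonempty) : Q ⊆ Q' ∨ Q' ⊆ Q := by
  rcases h.nest _ hQ _ hQ' with he | hc | hc
  · rw [he] at hne; exact absurd hne (by simp)
  · exact Or.inl hc
  · exact Or.inr hc

lemma SCtx.setInt_nonneg (h : SCtx μ S E f) (Q : Set X) : 0 ≤ ∫ y in Q, f y ∂μ :=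
  integral_nonneg (fun x => h.fpos x)

lemma SCtx.avg_nonneg (h : SCtx μ S E f) (Q : Set X) : 0 ≤ avg μ f Q :=
  mul_nonneg (by positivity) (h.setInt_nonneg Q)

lemma SCtx.F_nonneg (h : SCtx μ S E f) : 0 ≤ ∫ x, f x ∂μ := integral_nonneg h.fpos

lemma SCtx.setInt_le (h : SCtx μ S E f) (Q : Set X) :
    ∫ y in Q, f y ∂μ ≤ ∫ x, f x ∂μ :=
  setIntegral_le_integral h.fint (Filter.Eventually.of_forall h.fpos)

lemma SCtx.avg_le (h : SCtx μ S E f) {Q : Set X} (hQ : Q ∈ S) :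
    avg μ f Q ≤ (mr μ Q)⁻¹ * ∫ x, f x ∂μ :=
  mul_le_mul_of_nonneg_left (h.setInt_le Q) (by positivity)

lemma SCtx.avg_mr (h : SCtx μ S E f) {Q : Set X} (hQ : Q ∈ S) :
    avg μ f Q * mr μ Q = ∫ y in Q, f y ∂μ := by
  have hpos := h.mr_pos hQ
  rw [avg, mr] at *
  field_simp

lemma chain_max : ∀ (G : Finset (Set X)), G.Nonempty →
    (∀ R ∈ G, ∀ R' ∈ G, R ⊆ R' ∨ R' ⊆ R) → ∃ M ∈ G, ∀ R ∈ G, R ⊆ M := by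
  intro G
  induction G using Finset.induction_on with
  | empty => intro h; exact absurd h (by simp)
  | @insert a s ha ih =>
    intro _ hc
    by_cases hs : s.Nonempty
    · obtain ⟨M, hM, hMx⟩ := ih hs
        (fun R hR R' hR' => hc R (Finset.mem_insert_of_mem hR) R' (Finset.mem_insert_of_mem hR'))
      rcases hc a (Finset.mem_insert_self a s) M (Finset.mem_insert_of_mem hM) with hh | hh
      · refine ⟨M, Finset.mem_insert_of_mem hM, fun R hR => ?_⟩
        rcases Finset.mem_insert.1 hR with rfl | hR
        · exact hh
        · exact hMx R hR
      · refine ⟨a, Finset.mem_insert_self a s, fun R hR => ?_⟩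
        rcases Finset.mem_insert.1 hR with rfl | hR
        · exact subset_rfl
        · exact (hMx R hR).trans hh
    · rw [Finset.not_nonempty_iff_eq_empty] at hs
      subst hs
      exact ⟨a, Finset.mem_insert_self a _, by simp⟩

lemma chain_min : ∀ (G : Finset (Set X)), G.Nonempty →
    (∀ R ∈ G, ∀ R' ∈ G, R ⊆ R' ∨ R' ⊆ R) → ∃ M ∈ G, ∀ R ∈ G, M ⊆ R := by
  intro G
  induction G using Finset.induction_on with
  | empty => intro h; exact absurd h (by simp)
  | @insert a s ha ih =>
    intro _ hc
    by_cases hs : s.Nonempty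
    · obtain ⟨M, hM, hMx⟩ := ih hs
        (fun R hR R' hR' => hc R (Finset.mem_insert_of_mem hR) R' (Finset.mem_insert_of_mem hR'))
      rcases hc a (Finset.mem_insert_self a s) M (Finset.mem_insert_of_mem hM) with hh | hh
      · refine ⟨a, Finset.mem_insert_self a s, fun R hR => ?_⟩
        rcases Finset.mem_insert.1 hR with rfl | hR
        · exact subset_rfl
        · exact hh.trans (hMx R hR)
      · refine ⟨M, Finset.mem_insert_of_mem hM, fun R hR => ?_⟩
        rcases Finset.mem_insert.1 hR with rfl | hR
        · exact hh
        · exact hMx R hR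
    · rw [Finset.not_nonempty_iff_eq_empty] at hs
      subst hs
      exact ⟨a, Finset.mem_insert_self a _, by simp⟩

/-- every member of a nested-or-disjoint finite family has a maximal member above it -/
lemma SCtx.exists_maximal_above (h : SCtx μ S E f) (T : Finset (Set X)) (hT : ↑T ⊆ S)
    {R : Set X} (hR : R ∈ T) : ∃ M ∈ T, R ⊆ M ∧ ∀ R' ∈ T, M ⊆ R' → R' = M := by
  set G := T.filter (fun R' => R ⊆ R') with hG
  have hRG : R ∈ G := by simp [hG, hR]
  have hGsub : ∀ {R'}, R' ∈ G → R' ∈ T ∧ R ⊆ R' := by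
    intro R' hR'; simpa [hG] using hR'
  have hchain : ∀ A ∈ G, ∀ B ∈ G, A ⊆ B ∨ B ⊆ A := by
    intro A hA B hB
    obtain ⟨hAT, hRA⟩ := hGsub hA
    obtain ⟨hBT, hRB⟩ := hGsub hB
    refine h.comparable (hT hAT) (hT hBT) ?_
    obtain ⟨x, hx⟩ := h.nonempty (hT (hGsub hRG).1)
    exact ⟨x, hRA hx, hRB hx⟩
  obtain ⟨M, hMG, hMx⟩ := chain_max G ⟨R, hRG⟩ hchain
  obtain ⟨hMT, hRM⟩ := hGsub hMG
  refine ⟨M, hMT, hRM, fun R' hR' hMR' => ?_⟩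
  have hR'G : R' ∈ G := by simp [hG, hR', hRM.trans hMR']
  exact subset_antisymm (hMx R' hR'G) hMR'

/-- sum of measures of disjoint measurable subsets of `M` -/
lemma SCtx.disj_sum_le (h : SCtx μ S E f) (I : Finset (Set X)) (hI : ↑I ⊆ S)
    (hd : ∀ Q ∈ I, ∀ Q' ∈ I, Q ≠ Q' → Q ∩ Q' = ∅) {M : Set X} (hsub : ∀ Q ∈ I, Q ⊆ M)
    (hMfin : μ M ≠ ⊤) : ∑ Q ∈ I, mr μ Q ≤ (μ M).toReal := by
  have key : ∑ Q ∈ I, μ Q ≤ μ M := by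
    rw [← measure_biUnion_finset ?_ (fun Q hQ => h.meas Q (hI hQ))]
    · exact measure_mono (Set.iUnion₂_subset hsub)
    · intro Q hQ Q' hQ' hne
      simp only [Function.onFun, id]
      exact Set.disjoint_iff_inter_eq_empty.2 (hd Q hQ Q' hQ' hne)
  calc ∑ Q ∈ I, mr μ Q = (∑ Q ∈ I, μ Q).toReal :=
        (ENNReal.toReal_sum (fun Q hQ => (h.fin Q (hI hQ)).ne)).symm
    _ ≤ (μ M).toReal := ENNReal.toReal_mono hMfin key

/-- sparseness: the sum of measures of any finite subfamily lying inside `M` is at most `2 μ M`. -/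
lemma SCtx.esum_le (h : SCtx μ S E f) (A : Finset (Set X)) (hA : ↑A ⊆ S) {M : Set X}
    (hub : ∀ R ∈ A, R ⊆ M) (hMfin : μ M ≠ ⊤) :
    ∑ R ∈ A, mr μ R ≤ 2 * (μ M).toReal := by
  have hEfin : ∀ R ∈ A, μ (E R) ≠ ⊤ := by
    intro R hR
    exact (lt_of_le_of_lt (measure_mono (h.Esub R (hA hR))) (h.fin R (hA hR))).ne
  have key : ∑ R ∈ A, μ (E R) ≤ μ M := by
    rw [← measure_biUnion_finset ?_ (fun R hR => h.Emeas R (hA hR))]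
    · refine measure_mono (Set.iUnion₂_subset fun R hR => (h.Esub R (hA hR)).trans (hub R hR))
    · intro Q hQ Q' hQ' hne
      simp only [Function.onFun]
      exact Set.disjoint_iff_inter_eq_empty.2 (h.Edisj Q (hA hQ) Q' (hA hQ') hne)
  calc ∑ R ∈ A, mr μ R ≤ ∑ R ∈ A, 2 * (μ (E R)).toReal := by
        refine Finset.sum_le_sum fun R hR => ?_
        have h1 : μ R ≤ 2 * μ (E R) := h.Esp R (hA hR)
        have h2 : (2 : ℝ≥0∞) * μ (E R) ≠ ⊤ := by
          simp [ENNReal.mul_ne_top, hEfin R hR]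
        have := ENNReal.toReal_mono h2 h1
        rw [ENNReal.toReal_mul] at this
        simpa [mr] using this
    _ = 2 * (∑ R ∈ A, μ (E R)).toReal := by
        rw [ENNReal.toReal_sum hEfin, Finset.mul_sum]
    _ ≤ 2 * (μ M).toReal := by
        have := ENNReal.toReal_mono hMfin key
        linarith

set_option maxHeartbeats 1000000 in
/-- Key geometric-growth estimate: the reciprocals of measures of a chain of proper
supersets of `Q` sum to at most `4 / μ Q`. -/
lemma SCtx.invsum_le (h : SCtx μ S E f) {Q : Set X} (hQ : Q ∈ S) :
    ∀ (G : Finset (Set X)), ↑G ⊆ S → (∀ R ∈ G, Q ⊆ R ∧ Q ≠ R) →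
    (∑ R ∈ G, (mr μ R)⁻¹) + 2 / (mr μ Q + ∑ R ∈ G, mr μ R) ≤ 4 / mr μ Q := by
  intro G
  induction G using Finset.strongInductionOn with
  | _ G ih =>
    intro hGS hGQ
    have hmQ : 0 < mr μ Q := h.mr_pos hQ
    rcases Finset.eq_empty_or_nonempty G with rfl | hne
    · simp only [Finset.sum_empty, add_zero, zero_add]
      rw [div_le_div_iff₀ hmQ hmQ]
      nlinarith
    · -- G is a chain
      have hchain : ∀ A ∈ G, ∀ B ∈ G, A ⊆ B ∨ B ⊆ A := by
        intro A hA B hB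
        obtain ⟨x, hx⟩ := h.nonempty hQ
        exact h.comparable (hGS hA) (hGS hB) ⟨x, (hGQ A hA).1 hx, (hGQ B hB).1 hx⟩
      obtain ⟨M, hMG, hMx⟩ := chain_max G hne hchain
      set G' := G.erase M with hG'
      have hG'sub : G' ⊆ G := Finset.erase_subset _ _
      have hsplit : ∑ R ∈ G, mr μ R = mr μ M + ∑ R ∈ G', mr μ R :=
        (Finset.add_sum_erase G _ hMG).symm
      have hsplitinv : ∑ R ∈ G, (mr μ R)⁻¹ = (mr μ M)⁻¹ + ∑ R ∈ G', (mr μ R)⁻¹ :=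
        (Finset.add_sum_erase G _ hMG).symm
      -- sparseness: mr Q + sum over G ≤ 2 mr M
      have hQnotG : Q ∉ G := fun hc => (hGQ Q hc).2 rfl
      have hsp : mr μ Q + ∑ R ∈ G, mr μ R ≤ 2 * mr μ M := by
        have := h.esum_le (insert Q G) ?_ (M := M) ?_ (h.fin M (hGS hMG)).ne
        · rwa [Finset.sum_insert hQnotG] at this
        · intro R hR
          rcases Finset.mem_insert.1 hR with rfl | hR
          · exact hQ
          · exact hGS hR
        · intro R hR
          rcases Finset.mem_insert.1 hR with rfl | hR
          · exact ((hGQ M hMG).1).trans (subset_rfl)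
          · exact hMx R hR
      have hIH := ih G' (Finset.erase_ssubset hMG) (fun R hR => hGS (hG'sub hR))
        (fun R hR => hGQ R (hG'sub hR))
      set u := mr μ Q + ∑ R ∈ G', mr μ R with hu
      set v := mr μ M with hv
      have hvpos : 0 < v := h.mr_pos (hGS hMG)
      have hG'nonneg : 0 ≤ ∑ R ∈ G', mr μ R :=
        Finset.sum_nonneg fun R _ => mr_nonneg μ R
      have hupos : 0 < u := by rw [hu]; linarith
      have huv : u ≤ v := by
        rw [hsplit] at hsp; rw [hu, hv]; linarith
      have key : 1 / v + 2 / (u + v) ≤ 2 / u := by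
        rw [div_add_div _ _ hvpos.ne' (by positivity), div_le_div_iff₀ (by positivity) hupos]
        nlinarith [sq_nonneg (v - u)]
      rw [hsplitinv, hsplit]
      have harr : mr μ Q + (v + ∑ R ∈ G', mr μ R) = u + v := by rw [hu]; ring
      rw [harr]
      have : (mr μ M)⁻¹ = 1 / v := by rw [hv, one_div]
      rw [this]
      calc 1 / v + ∑ R ∈ G', (mr μ R)⁻¹ + 2 / (u + v)
          ≤ ∑ R ∈ G', (mr μ R)⁻¹ + 2 / u := by linarith
        _ ≤ 4 / mr μ Q := by
            have h2u : 2 / u ≤ 2 / (mr μ Q + ∑ R ∈ G', mr μ R) := by rw [hu]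
            linarith

/-- If `Big lam Q` then `μ Q ≤ 5 F / lam`. -/
lemma SCtx.big_mr_le (h : SCtx μ S E f) {lam : ℝ} (hlam : 0 < lam) {Q : Set X}
    (hB : Big μ S f lam Q) : mr μ Q ≤ 5 * ((∫ x, f x ∂μ) / lam) := by
  obtain ⟨hQS, G, hGS, hGQ, hGsum⟩ := hB
  set F := ∫ x, f x ∂μ with hF
  have hFnn : 0 ≤ F := h.F_nonneg
  have hmQ : 0 < mr μ Q := h.mr_pos hQS
  -- sum of inverses over G is ≤ 5 / mr Q
  have hinv : ∑ R ∈ G, (mr μ R)⁻¹ ≤ 5 / mr μ Q := by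
    have hG' := h.invsum_le hQS (G.erase Q) (fun R hR => hGS (Finset.erase_subset _ _ hR))
      (fun R hR => ⟨hGQ R (Finset.erase_subset _ _ hR), (Finset.ne_of_mem_erase hR).symm⟩)
    have h2 : 0 ≤ 2 / (mr μ Q + ∑ R ∈ G.erase Q, mr μ R) := by
      have : 0 ≤ ∑ R ∈ G.erase Q, mr μ R := Finset.sum_nonneg fun R _ => mr_nonneg μ R
      positivity
    by_cases hQG : Q ∈ G
    · rw [← Finset.add_sum_erase G _ hQG]
      have : (4:ℝ) / mr μ Q + (mr μ Q)⁻¹ = 5 / mr μ Q := by field_simp; ring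
      linarith
    · rw [Finset.erase_eq_of_notMem hQG] at hG' h2
      have : (4:ℝ) / mr μ Q ≤ 5 / mr μ Q := by
        rw [div_le_div_iff₀ hmQ hmQ]; nlinarith
      linarith
  have havg : ∑ R ∈ G, avg μ f R ≤ F * (5 / mr μ Q) := by
    calc ∑ R ∈ G, avg μ f R ≤ ∑ R ∈ G, (mr μ R)⁻¹ * F := by
          refine Finset.sum_le_sum fun R hR => ?_
          have := h.avg_le (hGS hR)
          linarith [this]
      _ = (∑ R ∈ G, (mr μ R)⁻¹) * F := by rw [Finset.sum_mul]
      _ ≤ (5 / mr μ Q) * F := by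
          exact mul_le_mul_of_nonneg_right hinv hFnn
      _ = F * (5 / mr μ Q) := by ring
  have hlt : lam < F * (5 / mr μ Q) := lt_of_lt_of_le hGsum havg
  have hlt2 : lam * mr μ Q < 5 * F := by
    have : F * (5 / mr μ Q) = 5 * F / mr μ Q := by ring
    rw [this, lt_div_iff₀ hmQ] at hlt
    linarith
  rw [mul_div_assoc']
  rw [le_div_iff₀ hlam]
  nlinarith

set_option maxHeartbeats 1000000 in
/-- Maximal-function type bound: disjoint cubes each contained in a cube of average `> c`. -/
lemma SCtx.caseB (h : SCtx μ S E f) {c : ℝ} (hc : 0 < c) (I : Finset (Set X)) (hI : ↑I ⊆ S)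
    (hd : ∀ Q ∈ I, ∀ Q' ∈ I, Q ≠ Q' → Q ∩ Q' = ∅)
    (hex : ∀ Q ∈ I, ∃ R ∈ S, Q ⊆ R ∧ c < avg μ f R) :
    ∑ Q ∈ I, mr μ Q ≤ (∫ x, f x ∂μ) / c := by
  classical
  -- choose the witness cube
  have hRf : ∀ Q : Set X, ∃ R : Set X, Q ∈ I → (R ∈ S ∧ Q ⊆ R ∧ c < avg μ f R) := by
    intro Q
    by_cases hQ : Q ∈ I
    · obtain ⟨R, hRS, hQR, havg⟩ := hex Q hQ
      exact ⟨R, fun _ => ⟨hRS, hQR, havg⟩⟩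
    · exact ⟨∅, fun hx => absurd hx hQ⟩
  choose Rf hRfspec using hRf
  set T := I.image Rf with hT
  have hTS : ↑T ⊆ S := by
    intro R hR
    simp only [hT, Finset.coe_image, Set.mem_image, Finset.mem_coe] at hR
    obtain ⟨Q, hQ, rfl⟩ := hR
    exact (hRfspec Q hQ).1
  -- choose a maximal element of T above Rf Q
  have hgM : ∀ Q : Set X, ∃ M : Set X, Q ∈ I →
      (M ∈ T ∧ Q ⊆ M ∧ ∀ R' ∈ T, M ⊆ R' → R' = M) := by
    intro Q
    by_cases hQ : Q ∈ I
    · obtain ⟨M, hMT, hsub, hmax⟩ := h.exists_maximal_above T hTS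
        (R := Rf Q) (Finset.mem_image_of_mem Rf hQ)
      exact ⟨M, fun _ => ⟨hMT, (hRfspec Q hQ).2.1.trans hsub, hmax⟩⟩
    · exact ⟨∅, fun hx => absurd hx hQ⟩
  choose gM hgMspec using hgM
  set J := I.image gM with hJ
  have hJT : ∀ M ∈ J, M ∈ T := by
    intro M hM
    simp only [hJ, Finset.mem_image] at hM
    obtain ⟨Q, hQ, rfl⟩ := hM
    exact (hgMspec Q hQ).1
  have hJS : ↑J ⊆ S := fun M hM => hTS (hJT M hM)
  have hJavg : ∀ M ∈ J, c < avg μ f M := by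
    intro M hM
    have := hJT M hM
    simp only [hT, Finset.mem_image] at this
    obtain ⟨Q, hQ, rfl⟩ := this
    exact (hRfspec Q hQ).2.2
  have hJdisj : ∀ M ∈ J, ∀ M' ∈ J, M ≠ M' → M ∩ M' = ∅ := by
    intro M hM M' hM' hne
    by_contra hint
    have hcomp := h.comparable (hJS hM) (hJS hM')
      (Set.nonempty_iff_ne_empty.2 hint)
    obtain ⟨Q, hQ, rfl⟩ := by simpa only [hJ, Finset.mem_image] using hM
    obtain ⟨Q', hQ', rfl⟩ := by simpa only [hJ, Finset.mem_image] using hM'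
    rcases hcomp with hcc | hcc
    · exact hne ((hgMspec Q hQ).2.2 _ (hJT _ hM') hcc).symm
    · exact hne ((hgMspec Q' hQ').2.2 _ (hJT _ hM) hcc)
  -- fiberwise sum
  have hfiber : ∑ Q ∈ I, mr μ Q = ∑ M ∈ J, ∑ Q ∈ I.filter (fun Q => gM Q = M), mr μ Q :=
    (Finset.sum_fiberwise_of_maps_to (fun Q hQ => Finset.mem_image_of_mem gM hQ) _).symm
  have hfiberle : ∀ M ∈ J, ∑ Q ∈ I.filter (fun Q => gM Q = M), mr μ Q ≤ mr μ M := by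
    intro M hM
    refine h.disj_sum_le _ (fun Q hQ => hI (Finset.filter_subset _ _ hQ))
      (fun Q hQ Q' hQ' hne => hd Q (Finset.filter_subset _ _ hQ) Q' (Finset.filter_subset _ _ hQ') hne)
      (M := M) ?_ (h.fin M (hJS hM)).ne
    intro Q hQ
    obtain ⟨hQI, hQM⟩ := Finset.mem_filter.1 hQ
    rw [← hQM]
    exact (hgMspec Q hQI).2.1
  have hmrle : ∀ M ∈ J, mr μ M ≤ (∫ y in M, f y ∂μ) / c := by
    intro M hM
    have havg := hJavg M hM
    have hmpos := h.mr_pos (hJS hM)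
    have := h.avg_mr (hJS hM)
    rw [le_div_iff₀ hc]
    nlinarith
  have hintsum : ∑ M ∈ J, ∫ y in M, f y ∂μ ≤ ∫ x, f x ∂μ := by
    rw [← integral_biUnion_finset J (fun M hM => h.meas M (hJS hM))
      (fun M hM M' hM' hne => Set.disjoint_iff_inter_eq_empty.2 (hJdisj M hM M' hM' hne))
      (fun M _ => h.fint.integrableOn)]
    exact setIntegral_le_integral h.fint (Filter.Eventually.of_forall h.fpos)
  calc ∑ Q ∈ I, mr μ Q = ∑ M ∈ J, ∑ Q ∈ I.filter (fun Q => gM Q = M), mr μ Q := hfiber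
    _ ≤ ∑ M ∈ J, mr μ M := Finset.sum_le_sum hfiberle
    _ ≤ ∑ M ∈ J, (∫ y in M, f y ∂μ) / c := Finset.sum_le_sum hmrle
    _ = (∑ M ∈ J, ∫ y in M, f y ∂μ) / c := by rw [Finset.sum_div]
    _ ≤ (∫ x, f x ∂μ) / c := by
        gcongr

set_option maxHeartbeats 1000000 in
/-- Dichotomy: if `Big lam Q` but no superset of `Q` has average `> lam/16`, then `Q` has
`8` supersets in `S` which are `Big (lam/2)`. -/
lemma SCtx.dicho (h : SCtx μ S E f) {lam : ℝ} (hlam : 0 < lam) {Q : Set X}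
    (hB : Big μ S f lam Q) (hnb : ∀ R ∈ S, Q ⊆ R → avg μ f R ≤ lam / 16) :
    ∃ A : Finset (Set X), ↑A ⊆ S ∧ A.card = 8 ∧ ∀ R ∈ A, Q ⊆ R ∧ Big μ S f (lam / 2) R := by
  classical
  obtain ⟨hQS, G, hGS, hGQ, hGsum⟩ := hB
  set tl : Set X → ℝ := fun R => ∑ R' ∈ G.filter (fun R' => R ⊆ R'), avg μ f R' with htl
  set A := G.filter (fun R => lam / 2 < tl R) with hA
  have hAG : A ⊆ G := Finset.filter_subset _ _
  have hchain : ∀ A' ∈ G, ∀ B ∈ G, A' ⊆ B ∨ B ⊆ A' := by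
    intro A' hA' B hB'
    obtain ⟨x, hx⟩ := h.nonempty hQS
    exact h.comparable (hGS hA') (hGS hB') ⟨x, hGQ A' hA' hx, hGQ B hB' hx⟩
  -- A has at least 8 elements
  have hcard : 8 ≤ A.card := by
    by_contra hlt
    push_neg at hlt
    have hcard7 : A.card ≤ 7 := by omega
    have hsplit : ∑ R ∈ A, avg μ f R + ∑ R ∈ G.filter (fun R => ¬ lam / 2 < tl R), avg μ f R
        = ∑ R ∈ G, avg μ f R := Finset.sum_filter_add_sum_filter_not G _ _
    have hAle : ∑ R ∈ A, avg μ f R ≤ 7 * (lam / 16) := by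
      calc ∑ R ∈ A, avg μ f R ≤ A.card * (lam / 16) := by
            rw [← nsmul_eq_mul]
            refine Finset.sum_le_card_nsmul A _ _ fun R hR => ?_
            exact hnb R (hGS (hAG hR)) (hGQ R (hAG hR))
        _ ≤ 7 * (lam / 16) := by
            have : (A.card : ℝ) ≤ 7 := by exact_mod_cast hcard7
            nlinarith
    set Gn := G.filter (fun R => ¬ lam / 2 < tl R) with hGn
    have hGnle : ∑ R ∈ Gn, avg μ f R ≤ lam / 2 := by
      rcases Finset.eq_empty_or_nonempty Gn with he | hne
      · rw [he]; simp; linarith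
      · obtain ⟨R₀, hR₀, hR₀min⟩ := chain_min Gn hne
          (fun A' hA' B hB' => hchain A' (Finset.filter_subset _ _ hA') B (Finset.filter_subset _ _ hB'))
        have hsub : Gn ⊆ G.filter (fun R' => R₀ ⊆ R') := by
          intro R hR
          exact Finset.mem_filter.2 ⟨Finset.filter_subset _ _ hR, hR₀min R hR⟩
        have h1 : ∑ R ∈ Gn, avg μ f R ≤ tl R₀ := by
          rw [htl]
          exact Finset.sum_le_sum_of_subset_of_nonneg hsub (fun R _ _ => h.avg_nonneg R)
        have h2 : ¬ lam / 2 < tl R₀ := (Finset.mem_filter.1 hR₀).2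
        push_neg at h2
        linarith
    linarith
  obtain ⟨A', hA'sub, hA'card⟩ := Finset.exists_subset_card_eq hcard
  refine ⟨A', fun R hR => hGS (hAG (hA'sub hR)), hA'card, fun R hR => ?_⟩
  have hRG : R ∈ G := hAG (hA'sub hR)
  have hRA : R ∈ A := hA'sub hR
  refine ⟨hGQ R hRG, hGS hRG, G.filter (fun R' => R ⊆ R'), ?_, ?_, ?_⟩
  · intro R' hR'
    simp only [Finset.coe_filter, Set.mem_setOf_eq] at hR'
    exact hGS hR'.1
  · intro R' hR'
    exact (Finset.mem_filter.1 hR').2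
  · exact (Finset.mem_filter.1 hRA).2

set_option maxHeartbeats 1000000 in
/-- Aggregation for the deep case: if each disjoint cube has `8` big supersets,
then their total measure is at most a quarter of that of a disjoint family
of `Big (lam/2)` cubes of no greater cardinality. -/
lemma SCtx.caseA (h : SCtx μ S E f) {lam : ℝ}
    (Ia : Finset (Set X)) (hIa : ↑Ia ⊆ S)
    (hd : ∀ Q ∈ Ia, ∀ Q' ∈ Ia, Q ≠ Q' → Q ∩ Q' = ∅)
    (A : Set X → Finset (Set X))
    (hA : ∀ Q ∈ Ia, ↑(A Q) ⊆ S ∧ (A Q).card = 8 ∧ ∀ R ∈ A Q, Q ⊆ R ∧ Big μ S f (lam / 2) R) :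
    ∃ I' : Finset (Set X), ↑I' ⊆ S ∧ (∀ R ∈ I', ∀ R' ∈ I', R ≠ R' → R ∩ R' = ∅) ∧
      (∀ R ∈ I', Big μ S f (lam / 2) R) ∧ I'.card ≤ Ia.card ∧
      ∑ Q ∈ Ia, mr μ Q ≤ 4⁻¹ * ∑ R ∈ I', mr μ R := by
  classical
  set Aall := Ia.biUnion A with hAall
  have hAallS : ↑Aall ⊆ S := by
    intro R hR
    simp only [hAall, Finset.coe_biUnion, Set.mem_iUnion, Finset.mem_coe] at hR
    obtain ⟨Q, hQ, hRQ⟩ := hR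
    exact (hA Q hQ).1 hRQ
  have hAallBig : ∀ R ∈ Aall, Big μ S f (lam / 2) R := by
    intro R hR
    obtain ⟨Q, hQ, hRQ⟩ := Finset.mem_biUnion.1 hR
    exact ((hA Q hQ).2.2 R hRQ).2
  set I' := Aall.filter (fun R => ∀ R' ∈ Aall, R ⊆ R' → R' = R) with hI'
  have hI'Aall : I' ⊆ Aall := Finset.filter_subset _ _
  have hI'S : ↑I' ⊆ S := fun R hR => hAallS (hI'Aall hR)
  have habove : ∀ R ∈ Aall, ∃ M ∈ I', R ⊆ M := by
    intro R hR
    obtain ⟨M, hMT, hsub, hmax⟩ := h.exists_maximal_above Aall hAallS hR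
    exact ⟨M, Finset.mem_filter.2 ⟨hMT, hmax⟩, hsub⟩
  have hI'disj : ∀ R ∈ I', ∀ R' ∈ I', R ≠ R' → R ∩ R' = ∅ := by
    intro R hR R' hR' hne
    by_contra hint
    obtain ⟨hRA, hRmax⟩ := Finset.mem_filter.1 hR
    obtain ⟨hR'A, hR'max⟩ := Finset.mem_filter.1 hR'
    rcases h.comparable (hI'S hR) (hI'S hR') (Set.nonempty_iff_ne_empty.2 hint) with hcc | hcc
    · exact hne (hRmax R' hR'A hcc).symm
    · exact hne (hR'max R hRA hcc)
  have hI'Big : ∀ R ∈ I', Big μ S f (lam / 2) R := fun R hR => hAallBig R (hI'Aall hR)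
  -- cardinality bound via injection
  have hwit : ∀ R : Set X, ∃ QR : Set X, R ∈ I' → (QR ∈ Ia ∧ R ∈ A QR) := by
    intro R
    by_cases hR : R ∈ I'
    · obtain ⟨Q, hQ, hRQ⟩ := Finset.mem_biUnion.1 (hI'Aall hR)
      exact ⟨Q, fun _ => ⟨hQ, hRQ⟩⟩
    · exact ⟨∅, fun hx => absurd hx hR⟩
  choose QR hQRspec using hwit
  have hcard : I'.card ≤ Ia.card := by
    refine Finset.card_le_card_of_injOn QR (fun R hR => (hQRspec R hR).1) ?_
    intro R hR R' hR' heq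
    by_contra hne
    have hQsub : QR R ⊆ R := ((hA _ (hQRspec R hR).1).2.2 _ (hQRspec R hR).2).1
    have hQsub' : QR R' ⊆ R' := ((hA _ (hQRspec R' hR').1).2.2 _ (hQRspec R' hR').2).1
    obtain ⟨x, hx⟩ := h.nonempty (hIa (hQRspec R hR).1)
    have hdisj := hI'disj R hR R' hR' hne
    have : x ∈ R ∩ R' := ⟨hQsub hx, hQsub' (heq ▸ hx)⟩
    rw [hdisj] at this
    exact this
  -- the sum bound
  have hdouble : 8 * ∑ Q ∈ Ia, mr μ Q ≤ ∑ R ∈ Aall, mr μ R := by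
    have step1 : ∀ Q ∈ Ia, 8 * mr μ Q = ∑ R ∈ Aall, (if R ∈ A Q then mr μ Q else 0) := by
      intro Q hQ
      rw [Finset.sum_ite_mem]
      have : Aall ∩ A Q = A Q := by
        refine Finset.inter_eq_right.2 (fun R hR => Finset.mem_biUnion.2 ⟨Q, hQ, hR⟩)
      rw [this, Finset.sum_const, (hA Q hQ).2.1]
      simp [mul_comm]
    calc 8 * ∑ Q ∈ Ia, mr μ Q = ∑ Q ∈ Ia, 8 * mr μ Q := by rw [Finset.mul_sum]
      _ = ∑ Q ∈ Ia, ∑ R ∈ Aall, (if R ∈ A Q then mr μ Q else 0) :=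
          Finset.sum_congr rfl step1
      _ = ∑ R ∈ Aall, ∑ Q ∈ Ia, (if R ∈ A Q then mr μ Q else 0) := Finset.sum_comm
      _ ≤ ∑ R ∈ Aall, mr μ R := by
          refine Finset.sum_le_sum fun R hR => ?_
          rw [← Finset.sum_filter]
          refine h.disj_sum_le _ (fun Q hQ => hIa (Finset.filter_subset _ _ hQ))
            (fun Q hQ Q' hQ' hne => hd Q (Finset.filter_subset _ _ hQ) Q'
              (Finset.filter_subset _ _ hQ') hne)
            (M := R) ?_ (h.fin R (hAallS hR)).ne
          intro Q hQ
          obtain ⟨hQI, hRAQ⟩ := Finset.mem_filter.1 hQ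
          exact ((hA Q hQI).2.2 R hRAQ).1
  have hup : ∑ R ∈ Aall, mr μ R ≤ 2 * ∑ R ∈ I', mr μ R := by
    set U := ⋃ R ∈ I', (R : Set X) with hU
    have hUfin : μ U ≠ ⊤ := by
      refine (lt_of_le_of_lt (measure_biUnion_finset_le I' id) ?_).ne
      exact ENNReal.sum_lt_top.2 fun R hR => h.fin R (hI'S hR)
    have hsub : ∀ R ∈ Aall, R ⊆ U := by
      intro R hR
      obtain ⟨M, hM, hRM⟩ := habove R hR
      refine hRM.trans ?_
      intro x hx
      rw [hU]
      exact Set.mem_biUnion hM hx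
    have h1 : ∑ R ∈ Aall, mr μ R ≤ 2 * (μ U).toReal := h.esum_le Aall hAallS hsub hUfin
    have h2 : (μ U).toReal ≤ ∑ R ∈ I', mr μ R := by
      have : μ U ≤ ∑ R ∈ I', μ R := by
        rw [hU]; exact measure_biUnion_finset_le I' _
      have h3 := ENNReal.toReal_mono (a := μ U)
        ((ENNReal.sum_lt_top.2 fun R hR => h.fin R (hI'S hR)).ne) this
      rwa [ENNReal.toReal_sum (fun R hR => (h.fin R (hI'S hR)).ne)] at h3
    linarith
  refine ⟨I', hI'S, hI'disj, hI'Big, hcard, by linarith⟩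

set_option maxHeartbeats 1000000 in
/-- The core recursion: total measure of a disjoint family of `Big lam` cubes. -/
lemma SCtx.core (h : SCtx μ S E f) : ∀ (k : ℕ) (lam : ℝ), 0 < lam →
    ∀ I : Finset (Set X), ↑I ⊆ S → (∀ Q ∈ I, ∀ Q' ∈ I, Q ≠ Q' → Q ∩ Q' = ∅) →
    (∀ Q ∈ I, Big μ S f lam Q) →
    ∑ Q ∈ I, mr μ Q ≤ 32 * (1 - ((2:ℝ)⁻¹)^k) * ((∫ x, f x ∂μ) / lam)
      + ((2:ℝ)⁻¹)^k * I.card * (5 * ((∫ x, f x ∂μ) / lam)) := by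
  classical
  intro k
  induction k with
  | zero =>
    intro lam hlam I hIS hd hBig
    simp only [pow_zero, one_mul, mul_zero, sub_self, zero_mul, zero_add]
    calc ∑ Q ∈ I, mr μ Q ≤ ∑ _Q ∈ I, 5 * ((∫ x, f x ∂μ) / lam) :=
          Finset.sum_le_sum fun Q hQ => h.big_mr_le hlam (hBig Q hQ)
      _ = I.card * (5 * ((∫ x, f x ∂μ) / lam)) := by
          rw [Finset.sum_const, nsmul_eq_mul]
  | succ k ih =>
    intro lam hlam I hIS hd hBig
    set F := ∫ x, f x ∂μ with hF
    have hFnn : 0 ≤ F := h.F_nonneg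
    set Ib := I.filter (fun Q => ∃ R ∈ S, Q ⊆ R ∧ lam / 16 < avg μ f R) with hIb
    set Ia := I.filter (fun Q => ¬ ∃ R ∈ S, Q ⊆ R ∧ lam / 16 < avg μ f R) with hIa
    have hsplit : ∑ Q ∈ Ib, mr μ Q + ∑ Q ∈ Ia, mr μ Q = ∑ Q ∈ I, mr μ Q :=
      Finset.sum_filter_add_sum_filter_not I _ _
    -- case b bound
    have hb : ∑ Q ∈ Ib, mr μ Q ≤ 16 * (F / lam) := by
      have := h.caseB (c := lam / 16) (by linarith) Ib
        (fun Q hQ => hIS (Finset.filter_subset _ _ hQ))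
        (fun Q hQ Q' hQ' hne => hd Q (Finset.filter_subset _ _ hQ) Q'
          (Finset.filter_subset _ _ hQ') hne)
        (fun Q hQ => (Finset.mem_filter.1 hQ).2)
      calc ∑ Q ∈ Ib, mr μ Q ≤ F / (lam / 16) := this
        _ = 16 * (F / lam) := by field_simp
    -- case a: each Q in Ia has 8 big supersets
    have hAex : ∀ Q : Set X, ∃ AQ : Finset (Set X), Q ∈ Ia →
        (↑AQ ⊆ S ∧ AQ.card = 8 ∧ ∀ R ∈ AQ, Q ⊆ R ∧ Big μ S f (lam / 2) R) := by
      intro Q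
      by_cases hQ : Q ∈ Ia
      · obtain ⟨hQI, hnb⟩ := Finset.mem_filter.1 hQ
        push_neg at hnb
        obtain ⟨AQ, h1, h2, h3⟩ := h.dicho hlam (hBig Q hQI) hnb
        exact ⟨AQ, fun _ => ⟨h1, h2, h3⟩⟩
      · exact ⟨∅, fun hx => absurd hx hQ⟩
    choose A hAspec using hAex
    obtain ⟨I', hI'S, hI'disj, hI'Big, hI'card, hI'sum⟩ := h.caseA Ia
      (fun Q hQ => hIS (Finset.filter_subset _ _ hQ))
      (fun Q hQ Q' hQ' hne => hd Q (Finset.filter_subset _ _ hQ) Q'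
        (Finset.filter_subset _ _ hQ') hne)
      A hAspec
    have hIH := ih (lam / 2) (by linarith) I' hI'S hI'disj hI'Big
    have hIacard : Ia.card ≤ I.card := Finset.card_le_card (Finset.filter_subset _ _)
    have hcard : (I'.card : ℝ) ≤ I.card := by
      exact_mod_cast le_trans hI'card hIacard
    have hhalf : F / (lam / 2) = 2 * (F / lam) := by field_simp
    rw [hhalf] at hIH
    have hI'nonneg : 0 ≤ ∑ R ∈ I', mr μ R := Finset.sum_nonneg fun R _ => mr_nonneg μ R
    have hFl : 0 ≤ F / lam := by positivity
    -- combine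
    have hIa2 : ∑ Q ∈ Ia, mr μ Q ≤ 4⁻¹ * (32 * (1 - ((2:ℝ)⁻¹)^k) * (2 * (F/lam))
        + ((2:ℝ)⁻¹)^k * I'.card * (5 * (2 * (F/lam)))) := by
      refine le_trans hI'sum ?_
      nlinarith
    have hpow : ((2:ℝ)⁻¹)^(k+1) = ((2:ℝ)⁻¹)^k * 2⁻¹ := pow_succ _ _
    have hpownn : (0:ℝ) ≤ ((2:ℝ)⁻¹)^k := by positivity
    rw [← hsplit]
    rw [hpow]
    nlinarith [mul_le_mul_of_nonneg_left hcard hpownn]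

set_option maxHeartbeats 1000000 in
/-- Bound for the measure of a finite union of `Big lam` cubes. -/
lemma SCtx.finUnion_bound (h : SCtx μ S E f) {lam : ℝ} (hlam : 0 < lam)
    (t : Finset (Set X)) (ht : ∀ Q ∈ t, Big μ S f lam Q) :
    μ (⋃ Q ∈ t, (Q : Set X)) ≤ ENNReal.ofReal (32 * ((∫ x, f x ∂μ) / lam)) := by
  classical
  set F := ∫ x, f x ∂μ with hF
  have hFnn : 0 ≤ F := h.F_nonneg
  have hFl : 0 ≤ F / lam := by positivity
  have htS : ↑t ⊆ S := fun Q hQ => (ht Q hQ).1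
  set I' := t.filter (fun R => ∀ R' ∈ t, R ⊆ R' → R' = R) with hI'
  have hI't : I' ⊆ t := Finset.filter_subset _ _
  have hI'S : ↑I' ⊆ S := fun R hR => htS (hI't hR)
  have habove : ∀ R ∈ t, ∃ M ∈ I', R ⊆ M := by
    intro R hR
    obtain ⟨M, hMT, hsub, hmax⟩ := h.exists_maximal_above t htS hR
    exact ⟨M, Finset.mem_filter.2 ⟨hMT, hmax⟩, hsub⟩
  have hUeq : (⋃ Q ∈ t, (Q : Set X)) ⊆ ⋃ Q ∈ I', (Q : Set X) := by
    intro x hx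
    obtain ⟨R, hR, hxR⟩ := Set.mem_iUnion₂.1 hx
    obtain ⟨M, hM, hRM⟩ := habove R hR
    exact Set.mem_biUnion hM (hRM hxR)
  have hI'disj : ∀ R ∈ I', ∀ R' ∈ I', R ≠ R' → R ∩ R' = ∅ := by
    intro R hR R' hR' hne
    by_contra hint
    obtain ⟨hRA, hRmax⟩ := Finset.mem_filter.1 hR
    obtain ⟨hR'A, hR'max⟩ := Finset.mem_filter.1 hR'
    rcases h.comparable (hI'S hR) (hI'S hR') (Set.nonempty_iff_ne_empty.2 hint) with hcc | hcc
    · exact hne (hRmax R' hR'A hcc).symm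
    · exact hne (hR'max R hRA hcc)
  -- limit of core bound
  have hsum : ∑ Q ∈ I', mr μ Q ≤ 32 * (F / lam) := by
    have hk : ∀ k : ℕ, ∑ Q ∈ I', mr μ Q
        ≤ 32 * (F / lam) + ((2:ℝ)⁻¹)^k * (I'.card * (5 * (F / lam))) := by
      intro k
      have := h.core k lam hlam I' hI'S hI'disj (fun Q hQ => ht Q (hI't hQ))
      have hp : (0:ℝ) ≤ ((2:ℝ)⁻¹)^k := by positivity
      have hp1 : ((2:ℝ)⁻¹)^k ≤ 1 := pow_le_one₀ (by norm_num) (by norm_num)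
      nlinarith
    refine le_of_forall_pos_le_add fun ε hε => ?_
    set B := (I'.card : ℝ) * (5 * (F / lam)) with hB
    have hBnn : 0 ≤ B := by
      have : (0:ℝ) ≤ (I'.card : ℝ) := Nat.cast_nonneg _
      nlinarith
    rcases eq_or_lt_of_le hBnn with hB0 | hBpos
    · have := hk 0
      rw [← hB0] at this
      simp at this
      linarith
    · obtain ⟨k, hkε⟩ := exists_pow_lt_of_lt_one (div_pos hε hBpos) (by norm_num : (2:ℝ)⁻¹ < 1)
      have := hk k
      have h2 : ((2:ℝ)⁻¹)^k * B < ε := by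
        rw [lt_div_iff₀ hBpos] at hkε
        linarith
      linarith
  calc μ (⋃ Q ∈ t, (Q : Set X)) ≤ μ (⋃ Q ∈ I', (Q : Set X)) := measure_mono hUeq
    _ ≤ ∑ Q ∈ I', μ Q := measure_biUnion_finset_le I' _
    _ = ENNReal.ofReal (∑ Q ∈ I', mr μ Q) := by
        rw [ENNReal.ofReal_sum_of_nonneg (fun Q _ => mr_nonneg μ Q)]
        refine Finset.sum_congr rfl fun Q hQ => ?_
        rw [mr, ENNReal.ofReal_toReal (h.fin Q (hI'S hQ)).ne]
    _ ≤ ENNReal.ofReal (32 * (F / lam)) := ENNReal.ofReal_le_ofReal hsum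

set_option maxHeartbeats 1000000 in
/-- The superlevel set of the sparse operator is covered by `Big lam` cubes. -/
lemma SCtx.subset_bigUnion (h : SCtx μ S E f) {lam : ℝ} (hlam : 0 < lam) :
    {x | lam < ∑' Q : S,
        (((μ (Q : Set X)).toReal)⁻¹ * ∫ y in (Q : Set X), f y ∂μ) *
          (Q : Set X).indicator (fun _ => (1 : ℝ)) x}
      ⊆ ⋃₀ {Q | Big μ S f lam Q} := by
  classical
  intro x hx
  simp only [Set.mem_setOf_eq] at hx
  set g : S → ℝ := fun Q =>
    (((μ (Q : Set X)).toReal)⁻¹ * ∫ y in (Q : Set X), f y ∂μ) *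
      (Q : Set X).indicator (fun _ => (1 : ℝ)) x with hg
  have hgnn : ∀ Q : S, 0 ≤ g Q := by
    intro Q
    refine mul_nonneg (mul_nonneg (by positivity) (h.setInt_nonneg _)) ?_
    exact Set.indicator_nonneg (fun _ _ => zero_le_one) x
  have hsumm : Summable g := by
    by_contra hns
    rw [tsum_eq_zero_of_not_summable hns] at hx
    linarith
  have hev : ∀ᶠ s : Finset S in Filter.atTop, lam < ∑ Q ∈ s, g Q :=
    (tendsto_order.1 hsumm.hasSum).1 lam hx
  obtain ⟨s, hs⟩ := hev.exists
  set t₀ := s.filter (fun Q : S => x ∈ (Q : Set X)) with ht₀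
  have hsum0 : ∑ Q ∈ t₀, g Q = ∑ Q ∈ s, g Q := by
    refine Finset.sum_filter_of_ne fun Q _ hQne => ?_
    by_contra hxQ
    apply hQne
    rw [hg]
    simp only [Set.indicator_of_notMem hxQ, mul_zero]
  have hsum1 : ∑ Q ∈ t₀, g Q = ∑ Q ∈ t₀, avg μ f (Q : Set X) := by
    refine Finset.sum_congr rfl fun Q hQ => ?_
    have hxQ : x ∈ (Q : Set X) := (Finset.mem_filter.1 hQ).2
    rw [hg, avg]
    simp [Set.indicator_of_mem hxQ]
  set t := t₀.image (Subtype.val) with ht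
  have hsum2 : ∑ R ∈ t, avg μ f R = ∑ Q ∈ t₀, avg μ f (Q : Set X) := by
    refine Finset.sum_image fun Q _ Q' _ hQQ' => Subtype.val_injective hQQ'
  have hlt : lam < ∑ R ∈ t, avg μ f R := by
    rw [hsum2, ← hsum1, hsum0]; exact hs
  have htS : ↑t ⊆ S := by
    intro R hR
    simp only [ht, Finset.coe_image, Set.mem_image, Finset.mem_coe] at hR
    obtain ⟨Q, _, rfl⟩ := hR
    exact Q.2
  have htx : ∀ R ∈ t, x ∈ R := by
    intro R hR
    simp only [ht, Finset.mem_image] at hR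
    obtain ⟨Q, hQ, rfl⟩ := hR
    exact (Finset.mem_filter.1 hQ).2
  have htne : t.Nonempty := by
    rcases Finset.eq_empty_or_nonempty t with he | hne
    · exfalso
      rw [he] at hlt
      simp at hlt
      linarith
    · exact hne
  have hchain : ∀ A ∈ t, ∀ B ∈ t, A ⊆ B ∨ B ⊆ A := by
    intro A hA B hB
    exact h.comparable (htS hA) (htS hB) ⟨x, htx A hA, htx B hB⟩
  obtain ⟨Q₀, hQ₀t, hQ₀min⟩ := chain_min t htne hchain
  refine Set.mem_sUnion.2 ⟨Q₀, ?_, htx Q₀ hQ₀t⟩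
  exact ⟨htS hQ₀t, t, htS, hQ₀min, hlt⟩

set_option maxHeartbeats 1000000 in
/-- The measure bound for the union of all `Big lam` cubes. -/
lemma SCtx.sUnion_bound (h : SCtx μ S E f) (hSc : S.Countable) {lam : ℝ} (hlam : 0 < lam) :
    μ (⋃₀ {Q | Big μ S f lam Q}) ≤ ENNReal.ofReal (32 * ((∫ x, f x ∂μ) / lam)) := by
  classical
  set C := {Q | Big μ S f lam Q} with hC
  have hCS : C ⊆ S := fun Q hQ => hQ.1
  have hCc : C.Countable := hSc.mono hCS
  rcases Set.eq_empty_or_nonempty C with he | hne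
  · rw [he]
    simp
  · obtain ⟨e, hes⟩ := hCc.exists_eq_range hne
    have heC : ∀ n, e n ∈ C := by
      intro n
      rw [hes]
      exact Set.mem_range_self n
    have hU : ⋃₀ C = ⋃ N, ⋃ n ∈ Finset.range N, e n := by
      rw [hes, Set.sUnion_range]
      ext y
      simp only [Set.mem_iUnion]
      constructor
      · rintro ⟨n, hn⟩
        exact ⟨n + 1, n, Finset.mem_range.2 (Nat.lt_succ_self n), hn⟩
      · rintro ⟨N, n, _, hn⟩
        exact ⟨n, hn⟩
    rw [hU]
    have hdir : Directed (· ⊆ ·) (fun N => ⋃ n ∈ Finset.range N, e n) := by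
      refine directed_of_isDirected_le ?_
      intro N M hNM
      refine Set.iUnion₂_subset fun n hn => ?_
      exact Set.subset_biUnion_of_mem (Finset.mem_range.2 (lt_of_lt_of_le (Finset.mem_range.1 hn) hNM))
    rw [Directed.measure_iUnion hdir]
    refine iSup_le fun N => ?_
    have : (⋃ n ∈ Finset.range N, e n) = ⋃ Q ∈ (Finset.range N).image e, (Q : Set X) := by
      simp [Finset.set_biUnion_finset_image]
    rw [this]
    refine h.finUnion_bound hlam _ ?_
    intro Q hQ
    obtain ⟨n, _, rfl⟩ := Finset.mem_image.1 hQ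
    exact heC n

end SparseAux


open SparseAux in
/-- A sparse operator satisfies the weak (1,1) inequality
`μ({T^S f > λ}) ≤ (C/λ) ∫ |f| dμ` with an absolute constant `C`. -/
theorem sparse_operator_weak_one_one :
    ∃ C : ℝ, 0 < C ∧
      ∀ (X : Type) (_ : MeasurableSpace X) (μ : Measure X)
        (D : Set (Set X)), D.Countable →
        (∀ Q ∈ D, MeasurableSet Q) →
        (∀ Q ∈ D, 0 < μ Q ∧ μ Q < ⊤) →
        (∀ Q ∈ D, ∀ Q' ∈ D, Q ∩ Q' = ∅ ∨ Q ⊆ Q' ∨ Q' ⊆ Q) →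
        ∀ (S : Set (Set X)), S ⊆ D →
        ∀ (E : Set X → Set X),
          (∀ Q ∈ S, E Q ⊆ Q) →
          (∀ Q ∈ S, MeasurableSet (E Q)) →
          (∀ Q ∈ S, ∀ Q' ∈ S, Q ≠ Q' → E Q ∩ E Q' = ∅) →
          (∀ Q ∈ S, μ Q ≤ 2 * μ (E Q)) →
          ∀ f : X → ℝ, Measurable f → (∀ x, 0 ≤ f x) → Integrable f μ →
            ∀ lam : ℝ, 0 < lam →
              μ {x | lam < ∑' Q : S,
                  (((μ (Q : Set X)).toReal)⁻¹ * ∫ y in (Q : Set X), f y ∂μ) *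
                    (Q : Set X).indicator (fun _ => (1 : ℝ)) x}
                ≤ ENNReal.ofReal ((C / lam) * ∫ x, |f x| ∂μ) := by
  refine ⟨32, by norm_num, ?_⟩
  intro X _ μ D hDc hDmeas hDpf hDnest S hSD E hEsub hEmeas hEdisj hEsp f hfmeas hfpos hfint
    lam hlam
  have h : SCtx μ S E f :=
    { meas := fun Q hQ => hDmeas Q (hSD hQ)
      pos := fun Q hQ => (hDpf Q (hSD hQ)).1
      fin := fun Q hQ => (hDpf Q (hSD hQ)).2
      nest := fun Q hQ Q' hQ' => hDnest Q (hSD hQ) Q' (hSD hQ')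
      Esub := hEsub
      Emeas := hEmeas
      Edisj := hEdisj
      Esp := hEsp
      fmeas := hfmeas
      fpos := hfpos
      fint := hfint }
  have habs : (∫ x, |f x| ∂μ) = ∫ x, f x ∂μ := by
    refine integral_congr_ae (Filter.Eventually.of_forall fun x => abs_of_nonneg (hfpos x))
  rw [habs]
  have hrw : (32 / lam) * ∫ x, f x ∂μ = 32 * ((∫ x, f x ∂μ) / lam) := by ring
  rw [hrw]
  calc μ {x | lam < ∑' Q : S,
        (((μ (Q : Set X)).toReal)⁻¹ * ∫ y in (Q : Set X), f y ∂μ) *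
          (Q : Set X).indicator (fun _ => (1 : ℝ)) x}
      ≤ μ (⋃₀ {Q | Big μ S f lam Q}) := measure_mono (h.subset_bigUnion hlam)
    _ ≤ ENNReal.ofReal (32 * ((∫ x, f x ∂μ) / lam)) := h.sUnion_bound (hDc.mono hSD) hlam
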